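/- For every integer n ≥ 1, ∏_{ν=1}^{n−1} Γ(ν/n) = (2π)^{(n−1)/2} / √n. -/

import Mathlib

open Finset Real

private lemma aux_abs_one_sub_exp (θ : ℝ) :
    ‖1 - Complex.exp (θ * Complex.I)‖ = 2 * |Real.sin (θ / 2)| := by
  rw [Complex.exp_mul_I]
  have h : (1 : ℂ) - (Complex.cos θ + Complex.sin θ * Complex.I)
      = ((1 - Real.cos θ : ℝ) : ℂ) + ((-Real.sin θ : ℝ) : ℂ) * Complex.I := by
    push_cast [Complex.ofReal_cos, Complex.ofReal_sin]
    ring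
  rw [h, Complex.norm_add_mul_I]
  have h2 : (1 - Real.cos θ) ^ 2 + (-Real.sin θ) ^ 2 = (2 * |Real.sin (θ / 2)|) ^ 2 := by
    have h3 := Real.sin_sq_add_cos_sq θ
    have h4 := Real.cos_two_mul (θ / 2)
    have h5 := Real.sin_sq_add_cos_sq (θ / 2)
    have h6 : sin (θ / 2) ^ 2 = |Real.sin (θ / 2)| ^ 2 := (sq_abs _).symm
    have h7 : 2 * (θ / 2) = θ := by ring
    rw [h7] at h4
    nlinarith [h4, h5, h6, h3]
  rw [h2, Real.sqrt_sq (by positivity)]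

private lemma aux_prod_one_sub_zeta (n : ℕ) (hn : 1 ≤ n) :
    ∏ ν ∈ Finset.Icc 1 (n - 1), (1 - Complex.exp (2 * Real.pi * Complex.I / n) ^ ν) = (n : ℂ) := by
  have hn0 : n ≠ 0 := by omega
  have hζ := Complex.isPrimitiveRoot_exp n hn0
  set ζ := Complex.exp (2 * Real.pi * Complex.I / n) with hζdef
  have h1 : (Polynomial.X ^ n - Polynomial.C 1 : Polynomial ℂ)
      = ∏ i ∈ Finset.range n, (Polynomial.X - Polynomial.C (ζ ^ i * 1)) :=
    X_pow_sub_C_eq_prod hζ (by omega) (one_pow n)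
  simp only [mul_one] at h1
  have hIcc : Finset.Icc 1 (n - 1) = Finset.Ico 1 n := by
    rw [← Finset.Ico_add_one_right_eq_Icc]
    congr 1
    omega
  have h2 : (Polynomial.X ^ n - Polynomial.C 1 : Polynomial ℂ)
      = (Polynomial.X - Polynomial.C 1) *
        ∏ i ∈ Finset.Icc 1 (n - 1), (Polynomial.X - Polynomial.C (ζ ^ i)) := by
    rw [h1, hIcc, Finset.range_eq_Ico,
      Finset.prod_eq_prod_Ico_succ_bot (by omega) (fun i => Polynomial.X - Polynomial.C (ζ ^ i))]
    simp
  have hgeom : (∑ i ∈ Finset.range n, (Polynomial.X : Polynomial ℂ) ^ i) *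
      (Polynomial.X - Polynomial.C 1) = Polynomial.X ^ n - Polynomial.C 1 := by
    simpa using geom_sum_mul (Polynomial.X : Polynomial ℂ) n
  have hX1 : (Polynomial.X - Polynomial.C 1 : Polynomial ℂ) ≠ 0 := Polynomial.X_sub_C_ne_zero 1
  have hcancel : (∑ i ∈ Finset.range n, (Polynomial.X : Polynomial ℂ) ^ i)
      = ∏ i ∈ Finset.Icc 1 (n - 1), (Polynomial.X - Polynomial.C (ζ ^ i)) := by
    apply mul_right_cancel₀ hX1
    rw [hgeom, h2, mul_comm]
  have h := congrArg (Polynomial.eval 1) hcancel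
  simp only [Polynomial.eval_finset_sum, Polynomial.eval_pow, Polynomial.eval_X, one_pow,
    Finset.sum_const, Finset.card_range, nsmul_eq_mul, mul_one, Polynomial.eval_prod,
    Polynomial.eval_sub, Polynomial.eval_one, Polynomial.eval_C] at h
  exact h.symm

private lemma aux_prod_sin (n : ℕ) (hn : 1 ≤ n) :
    ∏ ν ∈ Finset.Icc 1 (n - 1), (2 * Real.sin (Real.pi * (ν / n))) = (n : ℝ) := by
  have h := congrArg (‖·‖) (aux_prod_one_sub_zeta n hn)
  rw [norm_prod, Complex.norm_natCast] at h
  refine Eq.trans (Finset.prod_congr rfl ?_) h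
  intro ν hν
  rw [Finset.mem_Icc] at hν
  have hn0 : (n : ℝ) ≠ 0 := by positivity
  have hexp : Complex.exp (2 * Real.pi * Complex.I / n) ^ ν
      = Complex.exp ((2 * Real.pi * ν / n : ℝ) * Complex.I) := by
    rw [← Complex.exp_nat_mul]
    congr 1
    push_cast
    field_simp
  rw [hexp, aux_abs_one_sub_exp]
  have harg : 2 * Real.pi * ν / n / 2 = Real.pi * (ν / n) := by ring
  rw [harg]
  have hpos : 0 < Real.sin (Real.pi * (ν / n)) := by
    apply Real.sin_pos_of_pos_of_lt_pi
    · have : (0 : ℝ) < (ν : ℝ) / n := by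
        apply div_pos
        · exact_mod_cast Nat.lt_of_lt_of_le Nat.zero_lt_one hν.1
        · positivity
      positivity
    · have h1 : (ν : ℝ) / n < 1 := by
        rw [div_lt_one (by positivity)]
        exact_mod_cast (by omega : ν < n)
      calc Real.pi * (ν / n) < Real.pi * 1 := by
            apply mul_lt_mul_of_pos_left h1 Real.pi_pos
        _ = Real.pi := mul_one _
  rw [abs_of_pos hpos]

/-- Euler: ∏_{ν=1}^{n−1} Γ(ν/n) = (2π)^{(n−1)/2}/√n. -/
theorem euler_gamma_prod (n : ℕ) (hn : 1 ≤ n) :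
    ∏ ν ∈ Finset.Icc 1 (n - 1), Real.Gamma ((ν : ℝ) / (n : ℝ))
      = (2 * Real.pi) ^ (((n : ℝ) - 1) / 2) / Real.sqrt (n : ℝ) := by
  have hn0 : (0 : ℝ) < n := by exact_mod_cast Nat.lt_of_lt_of_le Nat.zero_lt_one hn
  set P := ∏ ν ∈ Finset.Icc 1 (n - 1), Real.Gamma ((ν : ℝ) / (n : ℝ)) with hP
  have hPpos : 0 < P := by
    apply Finset.prod_pos
    intro ν hν
    rw [Finset.mem_Icc] at hν
    apply Real.Gamma_pos_of_pos
    apply div_pos _ hn0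
    exact_mod_cast Nat.lt_of_lt_of_le Nat.zero_lt_one hν.1
  -- reindex reflection
  have hrefl : P = ∏ ν ∈ Finset.Icc 1 (n - 1), Real.Gamma (1 - (ν : ℝ) / n) := by
    rw [hP]
    apply Finset.prod_nbij' (fun ν => n - ν) (fun ν => n - ν)
    · intro a ha; rw [Finset.mem_Icc] at *; omega
    · intro a ha; rw [Finset.mem_Icc] at *; omega
    · intro a ha; rw [Finset.mem_Icc] at ha; omega
    · intro a ha; rw [Finset.mem_Icc] at ha; omega
    · intro a ha
      rw [Finset.mem_Icc] at ha
      congr 1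
      have : ((n - a : ℕ) : ℝ) = (n : ℝ) - a := by
        push_cast [Nat.cast_sub (by omega : a ≤ n)]; ring
      rw [this]
      field_simp
      ring
  have hsq : P ^ 2 = (2 * Real.pi) ^ (n - 1) / n := by
    have : P ^ 2 = ∏ ν ∈ Finset.Icc 1 (n - 1),
        (Real.Gamma ((ν : ℝ) / n) * Real.Gamma (1 - (ν : ℝ) / n)) := by
      rw [Finset.prod_mul_distrib, sq, ← hrefl, hP]
    rw [this]
    have : ∀ ν ∈ Finset.Icc 1 (n - 1),
        Real.Gamma ((ν : ℝ) / n) * Real.Gamma (1 - (ν : ℝ) / n)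
          = Real.pi / Real.sin (Real.pi * ((ν : ℝ) / n)) :=
      fun ν _ => Real.Gamma_mul_Gamma_one_sub _
    rw [Finset.prod_congr rfl this]
    have hsin := aux_prod_sin n hn
    have hcard : (Finset.Icc 1 (n - 1)).card = n - 1 := by
      rw [Nat.card_Icc]; omega
    have hsinpos : ∀ ν ∈ Finset.Icc 1 (n - 1), Real.sin (Real.pi * ((ν : ℝ) / n)) ≠ 0 := by
      intro ν hν
      rw [Finset.mem_Icc] at hν
      apply ne_of_gt
      apply Real.sin_pos_of_pos_of_lt_pi
      · have : (0 : ℝ) < (ν : ℝ) / n := by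
          apply div_pos _ hn0
          exact_mod_cast Nat.lt_of_lt_of_le Nat.zero_lt_one hν.1
        positivity
      · have h1 : (ν : ℝ) / n < 1 := by
          rw [div_lt_one hn0]
          exact_mod_cast (by omega : ν < n)
        calc Real.pi * (ν / n) < Real.pi * 1 := mul_lt_mul_of_pos_left h1 Real.pi_pos
          _ = Real.pi := mul_one _
    rw [Finset.prod_div_distrib, Finset.prod_const, hcard]
    have h2n : ∏ ν ∈ Finset.Icc 1 (n - 1), Real.sin (Real.pi * ((ν : ℝ) / n))
        = (n : ℝ) / 2 ^ (n - 1) := by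
      have := hsin
      rw [Finset.prod_mul_distrib, Finset.prod_const, hcard] at this
      field_simp at this ⊢
      linarith [this]
    rw [h2n]
    rw [div_div_eq_mul_div, mul_pow]
    field_simp
  have hPe : P = Real.sqrt ((2 * Real.pi) ^ (n - 1) / n) := by
    rw [← hsq, Real.sqrt_sq hPpos.le]
  rw [hPe, Real.sqrt_div (by positivity) _]
  congr 1
  have hexp : ((n : ℝ) - 1) / 2 = ((n - 1 : ℕ) : ℝ) * (1 / 2) := by
    push_cast [Nat.cast_sub hn]
    ring
  rw [hexp, Real.rpow_mul (by positivity), Real.rpow_natCast, ← Real.sqrt_eq_rpow]
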